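/- Let Ω be a density operator on H^{⊗M}, C the cyclic shift unitary with C^M = 1, X_k = Tr(C^k Ω), and P_j = (1/M) ∑_{k=0}^{M-1} ω^{−jk} X_k with ω = exp(2πi/M). If P₀ = 1 and P_j = 0 for all j ≠ 0, then C Ω = Ω. -/

import Mathlib

open Matrix Finset
open scoped ComplexOrder

/-- The cyclic shift unitary `C` on `H^{⊗M}`, represented as a matrix acting on the
tensor-product basis indexed by `Fin M → Fin d` (the `j`-th index is the basis label of
the `j`-th tensor factor).  It cyclically permutes the tensor factors, so that `Tr(C·(ρ₁⊗⋯⊗ρ_M)) = Tr(ρ₁⋯ρ_M)`. -/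
def cyclicShift (d M : ℕ) : Matrix (Fin M → Fin d) (Fin M → Fin d) ℂ :=
  Matrix.of fun S T => if (∀ j, S j = T (finRotate M j)) then 1 else 0

lemma cyclicShift_apply' (d M : ℕ) (S T : Fin M → Fin d) :
    cyclicShift d M S T = if S = (fun j => T (finRotate M j)) then 1 else 0 := by
  simp [cyclicShift, funext_iff]

lemma cyclicShift_unitary (d M : ℕ) :
    (cyclicShift d M)ᴴ * cyclicShift d M = 1 := by
  ext S T
  simp only [Matrix.mul_apply, conjTranspose_apply, cyclicShift_apply', one_apply]
  have hinj : Function.Injective (fun (U : Fin M → Fin d) => (fun j => U (finRotate M j))) := by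
    intro U V h
    funext j
    have := congr_fun h ((finRotate M).symm j)
    simpa only [Equiv.apply_symm_apply] using this
  rcases eq_or_ne S T with rfl | hne
  · rw [if_pos rfl, Finset.sum_eq_single (fun j => S (finRotate M j))]
    · simp
    · intro U _ hU
      rw [if_neg hU, star_zero, zero_mul]
    · simp
  · rw [if_neg hne]
    apply Finset.sum_eq_zero
    intro U _
    rcases eq_or_ne U (fun j => S (finRotate M j)) with rfl | hU
    · have hne' : (fun j => S (finRotate M j)) ≠ fun j => T (finRotate M j) :=
        fun h => hne (hinj h)
      rw [if_neg hne', mul_zero]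
    · rw [if_neg hU, star_zero, zero_mul]

lemma eq_zero_of_trace_conjTranspose_mul_self {n : Type*} [Fintype n] [DecidableEq n]
    (N : Matrix n n ℂ) (h : (Nᴴ * N).trace = 0) : N = 0 := by
  have htr : (Nᴴ * N).trace = ((∑ i : n, ∑ j : n, Complex.normSq (N j i) : ℝ) : ℂ) := by
    simp only [Matrix.trace, Matrix.diag, Matrix.mul_apply, conjTranspose_apply]
    push_cast
    refine Finset.sum_congr rfl fun i _ => Finset.sum_congr rfl fun j _ => ?_
    rw [mul_comm, Complex.star_def, Complex.mul_conj]
  rw [htr] at h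
  have hr : (∑ i : n, ∑ j : n, Complex.normSq (N j i) : ℝ) = 0 := by exact_mod_cast h
  have hz : ∀ i j, N j i = 0 := by
    intro i j
    have h1 : ∀ i ∈ Finset.univ (α := n), (0:ℝ) ≤ ∑ j : n, Complex.normSq (N j i) :=
      fun i _ => Finset.sum_nonneg fun j _ => Complex.normSq_nonneg _
    have h2 := (Finset.sum_eq_zero_iff_of_nonneg h1).mp hr i (Finset.mem_univ i)
    have h3 := (Finset.sum_eq_zero_iff_of_nonneg
      (fun j _ => Complex.normSq_nonneg (N j i))).mp h2 j (Finset.mem_univ j)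
    exact Complex.normSq_eq_zero.mp h3
  ext i j
  simpa using hz j i

/-- If `Tr(C Ω) = 1`, the Cauchy–Schwarz equality case gives `C Ω = Ω`. -/
lemma cyclic_invariant_of_trace_one (d M : ℕ)
    (Ω : Matrix (Fin M → Fin d) (Fin M → Fin d) ℂ)
    (hpsd : Ω.PosSemidef) (htr : Ω.trace = 1)
    (hX : (cyclicShift d M * Ω).trace = 1) :
    cyclicShift d M * Ω = Ω := by
  set C := cyclicShift d M with hC
  set A := (open scoped MatrixOrder in CFC.sqrt Ω) with hA
  have hAA : A * A = Ω := by
    open scoped MatrixOrder in exact CFC.sqrt_mul_sqrt_self Ω hpsd.nonneg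
  have hAH : Aᴴ = A := by
    open scoped MatrixOrder in exact (CFC.sqrt_nonneg Ω).posSemidef.isHermitian
  have hCu : Cᴴ * C = 1 := cyclicShift_unitary d M
  have hACA : (A * (C * A)).trace = 1 := by
    rw [Matrix.trace_mul_comm, mul_assoc, hAA, hX]
  have hACHA : (A * (Cᴴ * A)).trace = 1 := by
    have heq : (A * (Cᴴ * A)) = (A * (C * A))ᴴ := by
      simp [Matrix.conjTranspose_mul, hAH, mul_assoc]
    rw [heq, Matrix.trace_conjTranspose, hACA]
    simp
  set N := C * A - A with hN
  have hNtr : (Nᴴ * N).trace = 0 := by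
    have hexp : Nᴴ * N = A * (Cᴴ * (C * A)) - A * (Cᴴ * A) - A * (C * A) + A * A := by
      simp only [hN, Matrix.conjTranspose_sub, Matrix.conjTranspose_mul, hAH]
      noncomm_ring
    have hCCA : A * (Cᴴ * (C * A)) = A * A := by
      rw [← mul_assoc Cᴴ C A, hCu, one_mul]
    rw [hexp, hCCA]
    rw [Matrix.trace_add, Matrix.trace_sub, Matrix.trace_sub, hACHA, hACA, hAA, htr]
    ring
  have hN0 : N = 0 := eq_zero_of_trace_conjTranspose_mul_self N hNtr
  have hCA : C * A = A := sub_eq_zero.mp hN0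
  calc C * Ω = C * (A * A) := by rw [hAA]
    _ = (C * A) * A := by rw [mul_assoc]
    _ = A * A := by rw [hCA]
    _ = Ω := hAA


/-- Conversely, if the binned probabilities `P_j = (1/M) ∑_k ω^{-jk} X_k`
(with `X_k = Tr(C^k Ω)` and `ω = exp(2πi/M)`) of a density operator `Ω` on `H^{⊗M}`
satisfy `P₀ = 1` and `P_j = 0` for all `j ≠ 0`, then `C Ω = Ω`. -/
theorem cyclic_invariant_of_binned_probs (d M : ℕ) (hM : 1 ≤ M)
    (Ω : Matrix (Fin M → Fin d) (Fin M → Fin d) ℂ)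
    (hpsd : Ω.PosSemidef) (htr : Ω.trace = 1)
    (hP : ∀ j < M,
      ((M : ℂ))⁻¹ * ∑ k ∈ Finset.range M,
          (Complex.exp (2 * Real.pi * Complex.I / M)) ^ (-((j * k : ℕ) : ℤ)) *
            ((cyclicShift d M) ^ k * Ω).trace
        = if j = 0 then 1 else 0) :
    cyclicShift d M * Ω = Ω := by
  rcases eq_or_lt_of_le hM with hM1 | hM2
  · -- M = 1 : the cyclic shift is the identity
    have hMe : M = 1 := hM1.symm
    subst hMe
    have h1 : cyclicShift d 1 = 1 := by
      ext S T
      simp [cyclicShift, Matrix.one_apply, finRotate_one, funext_iff]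
    rw [h1, one_mul]
  · -- M ≥ 2
    set ζ := Complex.exp (2 * Real.pi * Complex.I / M) with hζ
    have hMne : (M : ℕ) ≠ 0 := by omega
    have hMCne : (M : ℂ) ≠ 0 := Nat.cast_ne_zero.mpr hMne
    have hprim : IsPrimitiveRoot ζ M := Complex.isPrimitiveRoot_exp M hMne
    have hζne : ζ ≠ 0 := Complex.exp_ne_zero _
    set X : ℕ → ℂ := fun k => ((cyclicShift d M) ^ k * Ω).trace with hXdef
    have hterm : ∀ j k : ℕ, ζ ^ j * ζ ^ (-((j * k : ℕ) : ℤ)) = (ζ ^ ((1 : ℤ) - k)) ^ j := by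
      intro j k
      rw [← zpow_natCast ζ j, ← zpow_add₀ hζne, ← zpow_natCast (ζ ^ ((1 : ℤ) - k)) j,
        ← _root_.zpow_mul]
      congr 1
      push_cast
      ring
    -- weighted sum of the hypothesis
    have hsum : ∑ j ∈ Finset.range M, ζ ^ j *
        (((M : ℂ))⁻¹ * ∑ k ∈ Finset.range M, ζ ^ (-((j * k : ℕ) : ℤ)) * X k)
        = 1 := by
      rw [Finset.sum_congr rfl (fun j (hj : j ∈ Finset.range M) => by
        rw [hP j (Finset.mem_range.mp hj)])]
      simp only [mul_ite, mul_one, mul_zero]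
      rw [Finset.sum_ite_eq' (Finset.range M) 0 (fun j => ζ ^ j)]
      simp [Finset.mem_range, Nat.pos_of_ne_zero hMne]
    -- swap the order of summation
    have hswap : ∑ j ∈ Finset.range M, ζ ^ j *
        (((M : ℂ))⁻¹ * ∑ k ∈ Finset.range M, ζ ^ (-((j * k : ℕ) : ℤ)) * X k)
        = ((M : ℂ))⁻¹ * ∑ k ∈ Finset.range M,
            (∑ j ∈ Finset.range M, (ζ ^ ((1 : ℤ) - k)) ^ j) * X k := by
      calc ∑ j ∈ Finset.range M, ζ ^ j *
            (((M : ℂ))⁻¹ * ∑ k ∈ Finset.range M, ζ ^ (-((j * k : ℕ) : ℤ)) * X k)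
          = ∑ j ∈ Finset.range M, ∑ k ∈ Finset.range M,
              ((M : ℂ))⁻¹ * ((ζ ^ ((1 : ℤ) - k)) ^ j * X k) := by
            refine Finset.sum_congr rfl fun j _ => ?_
            rw [Finset.mul_sum, Finset.mul_sum]
            refine Finset.sum_congr rfl fun k _ => ?_
            rw [← hterm j k]
            ring
        _ = ∑ k ∈ Finset.range M, ∑ j ∈ Finset.range M,
              ((M : ℂ))⁻¹ * ((ζ ^ ((1 : ℤ) - k)) ^ j * X k) := Finset.sum_comm
        _ = ((M : ℂ))⁻¹ * ∑ k ∈ Finset.range M,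
              (∑ j ∈ Finset.range M, (ζ ^ ((1 : ℤ) - k)) ^ j) * X k := by
            rw [Finset.mul_sum]
            refine Finset.sum_congr rfl fun k _ => ?_
            rw [Finset.sum_mul, Finset.mul_sum]
    -- geometric sums
    have hgeom : ∀ k ∈ Finset.range M,
        (∑ j ∈ Finset.range M, (ζ ^ ((1 : ℤ) - k)) ^ j) = if k = 1 then (M : ℂ) else 0 := by
      intro k hk
      rcases eq_or_ne k 1 with rfl | hk1
      · simp
      · have hμM : (ζ ^ ((1 : ℤ) - k)) ^ M = 1 := by
          rw [← zpow_natCast (ζ ^ ((1 : ℤ) - k)) M, ← _root_.zpow_mul, mul_comm,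
            _root_.zpow_mul, zpow_natCast, hprim.pow_eq_one, _root_.one_zpow]
        have hμ1 : ζ ^ ((1 : ℤ) - k) ≠ 1 := by
          intro h
          have hd := (hprim.zpow_eq_one_iff_dvd _).mp h
          have hk' : k < M := Finset.mem_range.mp hk
          have hne0 : (1 : ℤ) - k ≠ 0 := by
            intro h0
            apply hk1
            omega
          have hle := Int.le_of_dvd (abs_pos.mpr hne0) ((dvd_abs _ _).mpr hd)
          have habs : |(1 : ℤ) - k| < M := by
            rw [abs_lt]
            omega
          omega
        rw [if_neg hk1, geom_sum_eq hμ1, hμM, sub_self, zero_div]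
    have hfinal : ((M : ℂ))⁻¹ * ∑ k ∈ Finset.range M,
        (∑ j ∈ Finset.range M, (ζ ^ ((1 : ℤ) - k)) ^ j) * X k = X 1 := by
      rw [Finset.sum_congr rfl (fun k hk => by rw [hgeom k hk, ite_mul, zero_mul])]
      rw [Finset.sum_ite_eq' (Finset.range M) 1 (fun k => (M : ℂ) * X k)]
      rw [if_pos (Finset.mem_range.mpr hM2), ← mul_assoc, inv_mul_cancel₀ hMCne, one_mul]
    have hX1 : X 1 = 1 := by rw [← hfinal, ← hswap, hsum]
    have hXt : (cyclicShift d M * Ω).trace = 1 := by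
      rw [hXdef] at hX1
      simpa using hX1
    exact cyclic_invariant_of_trace_one d M Ω hpsd htr hXt
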